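/- Let p_i < p_j < p_k. Then along the half-line {(x_{ij}(y), y) : y > y_{ijk}} the phase θ_k strictly dominates θ_i; along {(x_{jk}(y), y) : y > y_{ijk}} the phase θ_i strictly dominates θ_k; and along {(x_{ik}(y), y) : y < y_{ijk}} the phase θ_j strictly dominates θ_i. In particular these three half-lines are non-visible. -/
import Mathlib

set_option maxHeartbeats 1000000

noncomputable def phase (pm cm x y : ℝ) : ℝ := pm * x + pm ^ 2 * y + cm

noncomputable def xline (pa pb ca cb y : ℝ) : ℝ := -(pa + pb) * y - (ca - cb) / (pa - pb)

noncomputable def c3s (pi pj pk ci cj ck : ℝ) : ℝ :=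
  ci / ((pi - pj) * (pi - pk)) + cj / ((pj - pk) * (pj - pi)) + ck / ((pk - pi) * (pk - pj))

noncomputable def ycrit (pi pj pk ci cj ck : ℝ) : ℝ := -c3s pi pj pk ci cj ck

/-- Non-visibility of three half-lines: along x = x_{ij}(y), y > y_{ijk}, θ_k dominates θ_i;
along x = x_{jk}(y), y > y_{ijk}, θ_i dominates θ_k;
along x = x_{ik}(y), y < y_{ijk}, θ_j dominates θ_i. -/
theorem nonvisible_halflines (pi pj pk ci cj ck : ℝ) (hij : pi < pj) (hjk : pj < pk) :
    (∀ y, y > ycrit pi pj pk ci cj ck →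
      phase pk ck (xline pi pj ci cj y) y > phase pi ci (xline pi pj ci cj y) y) ∧
    (∀ y, y > ycrit pi pj pk ci cj ck →
      phase pi ci (xline pj pk cj ck y) y > phase pk ck (xline pj pk cj ck y) y) ∧
    (∀ y, y < ycrit pi pj pk ci cj ck →
      phase pj cj (xline pi pk ci ck y) y > phase pi ci (xline pi pk ci ck y) y) := by
  have h1 : pi - pj ≠ 0 := by intro h; nlinarith
  have h2 : pj - pk ≠ 0 := by intro h; nlinarith
  have h3 : pi - pk ≠ 0 := by intro h; nlinarith
  have h1' : pj - pi ≠ 0 := by intro h; nlinarith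
  have h2' : pk - pj ≠ 0 := by intro h; nlinarith
  have h3' : pk - pi ≠ 0 := by intro h; nlinarith
  refine ⟨fun y hy => ?_, fun y hy => ?_, fun y hy => ?_⟩
  · rw [gt_iff_lt, ← sub_pos]
    rw [ycrit, gt_iff_lt, neg_lt, ← sub_neg, ← neg_add'] at hy
    have hy' : 0 < y + c3s pi pj pk ci cj ck := by linarith [neg_neg_iff_pos.mp hy]
    have key : phase pk ck (xline pi pj ci cj y) y - phase pi ci (xline pi pj ci cj y) y
        = (pk - pi) * (pk - pj) * (y + c3s pi pj pk ci cj ck) := by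
      unfold phase xline c3s
      field_simp [h1, h2, h3, h1', h2', h3', sub_ne_zero]
      ring
    rw [key]
    have : 0 < (pk - pi) * (pk - pj) := by nlinarith
    positivity
  · rw [gt_iff_lt, ← sub_pos]
    rw [ycrit, gt_iff_lt, neg_lt, ← sub_neg, ← neg_add'] at hy
    have hy' : 0 < y + c3s pi pj pk ci cj ck := by linarith [neg_neg_iff_pos.mp hy]
    have key : phase pi ci (xline pj pk cj ck y) y - phase pk ck (xline pj pk cj ck y) y
        = (pi - pk) * (pi - pj) * (y + c3s pi pj pk ci cj ck) := by
      unfold phase xline c3s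
      field_simp [h1, h2, h3, h1', h2', h3', sub_ne_zero]
      ring
    rw [key]
    have : 0 < (pi - pk) * (pi - pj) := by nlinarith
    positivity
  · rw [gt_iff_lt, ← sub_pos]
    rw [ycrit] at hy
    have hy' : y + c3s pi pj pk ci cj ck < 0 := by linarith
    have key : phase pj cj (xline pi pk ci ck y) y - phase pi ci (xline pi pk ci ck y) y
        = (pj - pi) * (pj - pk) * (y + c3s pi pj pk ci cj ck) := by
      unfold phase xline c3s
      field_simp [h1, h2, h3, h1', h2', h3', sub_ne_zero]
      ring
    rw [key]
    have hn : (pj - pi) * (pj - pk) < 0 := by nlinarith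
    exact mul_pos_of_neg_of_neg hn hy'
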